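/- arXiv:1711.03075 — 7 statements merged into one kernel-verified Lean document; each statement's English description precedes it below -/
import Mathlib

section
/- Any nonzero solution φ: [-a,a] → ℝ of φ'' + λφ = 0 with λ = α² > 0 satisfying φ'(a) = σφ(a) and -φ'(-a) = σφ(-a) for some σ ≥ 0 is a constant multiple of either sin(αt) (with σ = α·cot(αa)) or cos(αt) (with σ = -α·tan(αa)). -/
open Real

theorem stmt3 (a α σ : ℝ) (ha : 0 < a) (hα : 0 < α) (hσ : 0 ≤ σ)
    (φ : ℝ → ℝ) (hsmooth : ContDiff ℝ 2 φ)
    (hode : ∀ t ∈ Set.Icc (-a) a, deriv (deriv φ) t + α ^ 2 * φ t = 0)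
    (hbc1 : deriv φ a = σ * φ a)
    (hbc2 : -(deriv φ (-a)) = σ * φ (-a))
    (hne : ∃ t ∈ Set.Icc (-a) a, φ t ≠ 0) :
    ∃ c : ℝ, c ≠ 0 ∧
      (((∀ t ∈ Set.Icc (-a) a, φ t = c * Real.sin (α * t)) ∧
          σ = α * Real.cot (α * a)) ∨
       ((∀ t ∈ Set.Icc (-a) a, φ t = c * Real.cos (α * t)) ∧
          σ = -(α * Real.tan (α * a)))) := by
  -- differentiability facts
  rw [show (2 : WithTop ℕ∞) = 1 + 1 from rfl, contDiff_succ_iff_deriv] at hsmooth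
  have hd1 : Differentiable ℝ φ := hsmooth.1
  have hd2 : Differentiable ℝ (deriv φ) := hsmooth.2.2.differentiable one_ne_zero
  -- the model solution
  set B : ℝ := φ 0 with hB
  set A : ℝ := deriv φ 0 / α with hA
  set P : ℝ → ℝ := fun t => B * Real.cos (α * t) + A * Real.sin (α * t) with hP
  set Q : ℝ → ℝ := fun t => -(B * α) * Real.sin (α * t) + A * α * Real.cos (α * t) with hQ
  -- the linear vector field
  set L : ℝ × ℝ →L[ℝ] ℝ × ℝ :=
    (ContinuousLinearMap.snd ℝ ℝ ℝ).prod ((-(α ^ 2)) • ContinuousLinearMap.fst ℝ ℝ ℝ) with hL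
  have hLapp : ∀ p : ℝ × ℝ, L p = (p.2, -(α ^ 2) * p.1) := by
    intro p; simp [hL]
  set v : ℝ → ℝ × ℝ → ℝ × ℝ := fun _ p => (p.2, -(α ^ 2) * p.1) with hv
  have hlip : ∀ t, LipschitzOnWith ‖L‖₊ (v t) Set.univ := by
    intro t
    have : v t = fun p => L p := by funext p; rw [hLapp]
    rw [this]
    exact L.lipschitz.lipschitzOnWith
  set f : ℝ → ℝ × ℝ := fun t => (φ t, deriv φ t) with hf
  set g : ℝ → ℝ × ℝ := fun t => (P t, Q t) with hg
  have hαt : ∀ t : ℝ, HasDerivAt (fun t => α * t) α t := by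
    intro t
    simpa using (hasDerivAt_id t).const_mul α
  have hgP : ∀ t : ℝ, HasDerivAt P (Q t) t := by
    intro t
    have h1 := ((hαt t).cos).const_mul B
    have h2 := ((hαt t).sin).const_mul A
    convert h1.add h2 using 1
    · rfl
    · rfl
    · rfl
    simp [hQ]; ring
  have hgQ : ∀ t : ℝ, HasDerivAt Q (-(α ^ 2) * P t) t := by
    intro t
    have h1 := ((hαt t).sin).const_mul (-(B * α))
    have h2 := ((hαt t).cos).const_mul (A * α)
    convert h1.add h2 using 1
    · rfl
    · rfl
    · rfl
    simp [hP]; ring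
  have key : Set.EqOn f g (Set.Icc (-a) a) := by
    apply ODE_solution_unique_of_mem_Icc (v := v) (s := fun _ => Set.univ) (fun t _ => hlip t)
      (t₀ := 0) ⟨by linarith, ha⟩
    · exact (hd1.continuous.prodMk hd2.continuous).continuousOn
    · intro t ht
      have hode' : deriv (deriv φ) t = -(α ^ 2) * φ t := by
        have := hode t ⟨le_of_lt ht.1, le_of_lt ht.2⟩; linarith
      exact (hd1 t).hasDerivAt.prodMk (hode' ▸ (hd2 t).hasDerivAt)
    · intro t _; trivial
    · apply Continuous.continuousOn
      apply Continuous.prodMk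
      · simp only [hP]; fun_prop
      · simp only [hQ]; fun_prop
    · intro t ht
      exact (hgP t).prodMk (hgQ t)
    · intro t _; trivial
    · simp only [hf, hg, Prod.mk.injEq]
      constructor
      · simp [hP, hB]
      · simp [hQ, hA]
        field_simp
  have hmem_a : a ∈ Set.Icc (-a) a := ⟨by linarith, le_refl a⟩
  have hmem_na : (-a) ∈ Set.Icc (-a) a := ⟨le_refl _, by linarith⟩
  have hφ : ∀ t ∈ Set.Icc (-a) a, φ t = P t := fun t ht => congrArg Prod.fst (key ht)
  have hφ' : ∀ t ∈ Set.Icc (-a) a, deriv φ t = Q t := fun t ht => congrArg Prod.snd (key ht)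
  have hsc : Real.sin (α * a) ^ 2 + Real.cos (α * a) ^ 2 = 1 := Real.sin_sq_add_cos_sq _
  -- boundary equations
  have e1 : -(B * α) * Real.sin (α * a) + A * α * Real.cos (α * a)
      = σ * (B * Real.cos (α * a) + A * Real.sin (α * a)) := by
    have h := hbc1
    rw [hφ a hmem_a, hφ' a hmem_a] at h
    simpa [hP, hQ] using h
  have e2 : -(-(B * α) * (-Real.sin (α * a)) + A * α * Real.cos (α * a))
      = σ * (B * Real.cos (α * a) + A * (-Real.sin (α * a))) := by
    have h := hbc2
    rw [hφ (-a) hmem_na, hφ' (-a) hmem_na] at h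
    simpa [hP, hQ, mul_neg, Real.sin_neg, Real.cos_neg] using h
  have eB : B * (α * Real.sin (α * a) + σ * Real.cos (α * a)) = 0 := by nlinarith [e1, e2]
  have eA : A * (α * Real.cos (α * a) - σ * Real.sin (α * a)) = 0 := by nlinarith [e1, e2]
  -- A and B not both zero
  have hAB : A ≠ 0 ∨ B ≠ 0 := by
    by_contra h
    push_neg at h
    obtain ⟨t, ht, htne⟩ := hne
    exact htne (by rw [hφ t ht]; simp [hP, h.1, h.2])
  rcases eq_or_ne B 0 with hB0 | hB0
  · -- sine case
    have hA0 : A ≠ 0 := by rcases hAB with h | h; exact h; exact absurd hB0 h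
    have hcs : α * Real.cos (α * a) = σ * Real.sin (α * a) := by
      rcases mul_eq_zero.mp eA with h | h
      · exact absurd h hA0
      · linarith
    have hs0 : Real.sin (α * a) ≠ 0 := by
      intro h
      have hc0 : Real.cos (α * a) = 0 := by
        rw [h, mul_zero] at hcs
        rcases mul_eq_zero.mp hcs with h' | h'
        · exact absurd h' (ne_of_gt hα)
        · exact h'
      rw [h, hc0] at hsc; norm_num at hsc
    refine ⟨A, hA0, Or.inl ⟨fun t ht => by rw [hφ t ht]; simp [hP, hB0], ?_⟩⟩
    rw [Real.cot_eq_cos_div_sin]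
    field_simp
    linarith [hcs]
  · -- B ≠ 0
    have hsc2 : α * Real.sin (α * a) + σ * Real.cos (α * a) = 0 := by
      rcases mul_eq_zero.mp eB with h | h
      · exact absurd h hB0
      · exact h
    rcases eq_or_ne A 0 with hA0 | hA0
    · -- cosine case
      have hc0 : Real.cos (α * a) ≠ 0 := by
        intro h
        have hs0 : Real.sin (α * a) = 0 := by
          rw [h, mul_zero, add_zero] at hsc2
          rcases mul_eq_zero.mp hsc2 with h' | h'
          · exact absurd h' (ne_of_gt hα)
          · exact h'
        rw [h, hs0] at hsc; norm_num at hsc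
      refine ⟨B, hB0, Or.inr ⟨fun t ht => by rw [hφ t ht]; simp [hP, hA0], ?_⟩⟩
      rw [Real.tan_eq_sin_div_cos]
      field_simp
      linarith [hsc2]
    · -- contradiction case
      exfalso
      have hcs : α * Real.cos (α * a) = σ * Real.sin (α * a) := by
        rcases mul_eq_zero.mp eA with h | h
        · exact absurd h hA0
        · linarith
      have h1 : σ * Real.cos (α * a) = -(α * Real.sin (α * a)) := by linarith
      have hσ0 : σ = 0 := by
        linear_combination (-(Real.sin (α * a))) * hcs + Real.cos (α * a) * h1 + (-σ) * hsc
      rw [hσ0, zero_mul] at hcs h1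
      have hc0 : Real.cos (α * a) = 0 := by
        rcases mul_eq_zero.mp hcs with h | h
        · exact absurd h (ne_of_gt hα)
        · exact h
      have hs0 : Real.sin (α * a) = 0 := by
        have h2 : α * Real.sin (α * a) = 0 := by linarith
        rcases mul_eq_zero.mp h2 with h | h
        · exact absurd h (ne_of_gt hα)
        · exact h
      rw [hc0, hs0] at hsc; norm_num at hsc
end

section
/- Let (a_n) and (b_n) be sequences of positive reals tending to infinity with a_n = b_n + O(b_n^{-s}) for some s > -1, and let N_a(λ) = #{n : a_n < λ}, N_b(λ) = #{n : b_n < λ}. Suppose N_a(λ) = Σ_{k=0}^{K} c_k λ^{p-k} + O(λ^r) with r < p - K. Then N_b(λ) = Σ_{k=0}^{K} c_k λ^{p-k} + O(λ^{r'}), where r' = max(r, p - 1 - s). -/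
open Real Filter Asymptotics Finset

lemma stmt7_finite {a : ℕ → ℝ} (ha : Filter.Tendsto a atTop atTop) (lam : ℝ) :
    {n : ℕ | a n < lam}.Finite := by
  obtain ⟨N, hN⟩ := Filter.eventually_atTop.mp (ha.eventually_ge_atTop lam)
  refine (Set.finite_Iio N).subset ?_
  intro n hn
  by_contra h
  exact absurd (hN n (not_lt.mp h)) (not_le.mpr hn)

lemma stmt7_rpow_subadd {x y t : ℝ} (hx : 0 ≤ x) (hy : 0 ≤ y) (ht : 0 ≤ t) (ht1 : t ≤ 1) :
    (x + y) ^ t ≤ x ^ t + y ^ t := by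
  have h := NNReal.rpow_add_le_add_rpow x.toNNReal y.toNNReal ht ht1
  have h' : (((x.toNNReal + y.toNNReal) ^ t : NNReal) : ℝ)
      ≤ ((x.toNNReal ^ t + y.toNNReal ^ t : NNReal) : ℝ) := by exact_mod_cast h
  rw [NNReal.coe_add, NNReal.coe_rpow, NNReal.coe_rpow, NNReal.coe_rpow, NNReal.coe_add,
    Real.coe_toNNReal x hx, Real.coe_toNNReal y hy] at h'
  exact h'

-- MVT bound
lemma stmt7_mvt (q x h : ℝ) (hx : 1 ≤ x) (hh : |h| ≤ x / 2) :
    |(x + h) ^ q - x ^ q| ≤ (|q| * 2 ^ |q - 1|) * x ^ (q - 1) * |h| := by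
  have hx0 : (0:ℝ) < x := lt_of_lt_of_le one_pos hx
  set S : Set ℝ := Set.Icc (x / 2) (2 * x) with hS
  have hderiv : ∀ y ∈ S, HasDerivWithinAt (fun z : ℝ => z ^ q) (q * y ^ (q - 1)) S y := by
    intro y hy
    have hy0 : (0:ℝ) < y := lt_of_lt_of_le (by linarith) hy.1
    exact (Real.hasDerivAt_rpow_const (Or.inl hy0.ne')).hasDerivWithinAt
  have hbound : ∀ y ∈ S, ‖q * y ^ (q - 1)‖ ≤ |q| * 2 ^ |q - 1| * x ^ (q - 1) := by
    intro y hy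
    have hy0 : (0:ℝ) < y := lt_of_lt_of_le (by linarith) hy.1
    rw [norm_mul, Real.norm_eq_abs, Real.norm_eq_abs,
      abs_of_nonneg (Real.rpow_nonneg hy0.le _), mul_assoc]
    refine mul_le_mul_of_nonneg_left ?_ (abs_nonneg q)
    rcases le_or_gt 0 (q - 1) with hq | hq
    · calc y ^ (q - 1) ≤ (2 * x) ^ (q - 1) :=
            Real.rpow_le_rpow hy0.le hy.2 hq
        _ = 2 ^ (q - 1) * x ^ (q - 1) := Real.mul_rpow (by norm_num) hx0.le
        _ ≤ 2 ^ |q - 1| * x ^ (q - 1) := by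
            refine mul_le_mul_of_nonneg_right
              (Real.rpow_le_rpow_of_exponent_le one_le_two (le_abs_self _))
              (Real.rpow_nonneg hx0.le _)
    · calc y ^ (q - 1) ≤ (x / 2) ^ (q - 1) :=
            Real.rpow_le_rpow_of_nonpos (by linarith) hy.1 hq.le
        _ = 2 ^ (1 - q) * x ^ (q - 1) := by
            rw [Real.div_rpow hx0.le (by norm_num), div_eq_mul_inv,
              ← Real.rpow_neg (by norm_num : (0:ℝ) ≤ 2), neg_sub, mul_comm]
        _ ≤ 2 ^ |q - 1| * x ^ (q - 1) := by
            refine mul_le_mul_of_nonneg_right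
              (Real.rpow_le_rpow_of_exponent_le one_le_two ?_) (Real.rpow_nonneg hx0.le _)
            rw [abs_sub_comm]
            exact le_abs_self _
  have hconv : Convex ℝ S := convex_Icc _ _
  have hxS : x ∈ S := ⟨by linarith, by linarith⟩
  have hxhS : x + h ∈ S := by
    constructor
    · have := neg_abs_le h; linarith
    · have := le_abs_self h; linarith
  have := hconv.norm_image_sub_le_of_norm_hasDerivWithin_le hderiv hbound hxS hxhS
  simpa [Real.norm_eq_abs, add_sub_cancel_left] using this

lemma stmt7_incl (a b : ℕ → ℝ) (s : ℝ) (hs : -1 < s) (C₀ : ℝ) (hC₀ : 0 < C₀) (N₀ : ℕ)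
    (h : ∀ n, N₀ ≤ n → |a n - b n| ≤ C₀ * (b n) ^ (-s) ∧ 1 ≤ b n) :
    ∃ C > 0, ∀ lam : ℝ, 2 * C₀ + 2 ≤ lam → ∀ n, N₀ ≤ n →
      (b n < lam → a n < lam + C * lam ^ (-s)) ∧
      (lam ≤ b n → lam - C * lam ^ (-s) ≤ a n) := by
  have hs1 : 0 < 1 + s := by linarith
  have hKnn : 0 ≤ C₀ * C₀ ^ (1 / (1 + s)) := mul_nonneg hC₀.le (Real.rpow_nonneg hC₀.le _)
  have h2s : (0:ℝ) < 2 ^ s := Real.rpow_pos_of_pos two_pos _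
  obtain ⟨K, hK⟩ : ∃ K : ℝ, K = C₀ + C₀ * C₀ ^ (1 / (1 + s)) := ⟨_, rfl⟩
  have hKC₀ : C₀ ≤ K := by rw [hK]; linarith
  have hKpos : 0 < K := lt_of_lt_of_le hC₀ hKC₀
  obtain ⟨C, hC⟩ : ∃ C : ℝ, C = C₀ * 2 ^ s + C₀ + K + 1 := ⟨_, rfl⟩
  have h2sC₀ : 0 ≤ C₀ * 2 ^ s := mul_nonneg hC₀.le h2s.le
  have hC₀C : C₀ ≤ C := by rw [hC]; linarith
  have hCK : C₀ + K ≤ C := by rw [hC]; linarith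
  have h2sC : C₀ * 2 ^ s < C := by rw [hC]; linarith
  have hCpos : (0:ℝ) < C := lt_of_lt_of_le hC₀ hC₀C
  refine ⟨C, hCpos, ?_⟩
  intro lam hlam n hn
  have hlam1 : (1:ℝ) ≤ lam := by linarith
  have hlam0 : (0:ℝ) < lam := by linarith
  have hab := (h n hn).1
  have hb1 := (h n hn).2
  have hb0 : (0:ℝ) < b n := lt_of_lt_of_le one_pos hb1
  have hub : a n ≤ b n + C₀ * (b n) ^ (-s) := by
    have := abs_le.mp hab; linarith [this.1, this.2]
  have hlb : b n - C₀ * (b n) ^ (-s) ≤ a n := by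
    have := abs_le.mp hab; linarith [this.1, this.2]
  have hlamrpos : (0:ℝ) < lam ^ (-s) := Real.rpow_pos_of_pos hlam0 _
  have hbrpos : (0:ℝ) < (b n) ^ (-s) := Real.rpow_pos_of_pos hb0 _
  rcases le_or_gt 0 s with hs0 | hs0
  · -- s ≥ 0
    constructor
    · intro hblt
      rcases le_or_gt (lam / 2) (b n) with hbig | hsmall
      · have hb' : (b n) ^ (-s) ≤ (lam / 2) ^ (-s) := by
          rcases eq_or_lt_of_le hs0 with h0 | hpos
          · simp [← h0]
          · exact Real.rpow_le_rpow_of_nonpos (by linarith) hbig (by linarith)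
        have heq : (lam / 2) ^ (-s) = lam ^ (-s) * 2 ^ s := by
          rw [Real.div_rpow hlam0.le (by norm_num), div_eq_mul_inv,
            ← Real.rpow_neg (by norm_num : (0:ℝ) ≤ 2), neg_neg]
        rw [heq] at hb'
        have h1 : C₀ * (b n ^ (-s)) ≤ C₀ * (lam ^ (-s) * 2 ^ s) :=
          mul_le_mul_of_nonneg_left hb' hC₀.le
        have h1' : C₀ * (lam ^ (-s) * 2 ^ s) = C₀ * 2 ^ s * lam ^ (-s) := by ring
        have h2 : C₀ * 2 ^ s * lam ^ (-s) < C * lam ^ (-s) :=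
          mul_lt_mul_of_pos_right h2sC hlamrpos
        linarith [h1, h2, hub, hblt]
      · have hb' : (b n) ^ (-s) ≤ 1 :=
          Real.rpow_le_one_of_one_le_of_nonpos hb1 (by linarith)
        have h1 : C₀ * (b n ^ (-s)) ≤ C₀ * 1 := mul_le_mul_of_nonneg_left hb' hC₀.le
        have h2 : 0 < C * lam ^ (-s) := mul_pos hCpos hlamrpos
        rw [mul_one] at h1
        linarith
    · intro hble
      have hb' : (b n) ^ (-s) ≤ lam ^ (-s) := by
        rcases eq_or_lt_of_le hs0 with h0 | hpos
        · simp [← h0]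
        · exact Real.rpow_le_rpow_of_nonpos hlam0 hble (by linarith)
      have h1 : C₀ * (b n ^ (-s)) ≤ C₀ * (lam ^ (-s)) := mul_le_mul_of_nonneg_left hb' hC₀.le
      have h2 := mul_le_mul_of_nonneg_right hC₀C hlamrpos.le
      linarith
  · -- s < 0
    have ht0 : 0 < -s := by linarith
    have ht1 : -s ≤ 1 := by linarith
    constructor
    · intro hblt
      have hb' : (b n) ^ (-s) ≤ lam ^ (-s) := Real.rpow_le_rpow hb0.le hblt.le ht0.le
      have h1 : C₀ * (b n ^ (-s)) ≤ C₀ * (lam ^ (-s)) := mul_le_mul_of_nonneg_left hb' hC₀.le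
      have h2 := mul_le_mul_of_nonneg_right hC₀C hlamrpos.le
      linarith
    · intro hble
      obtain ⟨u, hu⟩ : ∃ u : ℝ, u = b n - lam := ⟨_, rfl⟩
      have hu0 : 0 ≤ u := by rw [hu]; linarith
      have key : C₀ * u ^ (-s) ≤ u + K := by
        rcases le_or_gt u 1 with hu1 | hu1
        · have h1 : u ^ (-s) ≤ 1 := Real.rpow_le_one hu0 hu1 ht0.le
          have h2 : C₀ * u ^ (-s) ≤ C₀ * 1 := mul_le_mul_of_nonneg_left h1 hC₀.le
          rw [mul_one] at h2
          linarith
        · have hu0' : (0:ℝ) < u := by linarith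
          rcases le_or_gt C₀ (u ^ (1 + s)) with hcase | hcase
          · have h1 : C₀ * u ^ (-s) ≤ u ^ (1 + s) * u ^ (-s) :=
              mul_le_mul_of_nonneg_right hcase (Real.rpow_nonneg hu0 _)
            have heq : u ^ (1 + s) * u ^ (-s) = u := by
              rw [← Real.rpow_add hu0']; norm_num
            rw [heq] at h1
            linarith
          · have hule : u ≤ C₀ ^ (1 / (1 + s)) := by
              have h3 : (u ^ (1 + s)) ^ (1 / (1 + s)) ≤ C₀ ^ (1 / (1 + s)) :=
                Real.rpow_le_rpow (Real.rpow_nonneg hu0 _) hcase.le (by positivity)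
              have h4 : (u ^ (1 + s)) ^ (1 / (1 + s)) = u := by
                rw [← Real.rpow_mul hu0, mul_one_div, div_self hs1.ne']
                exact Real.rpow_one u
              rwa [h4] at h3
            have h5 : u ^ (-s) ≤ u := by
              have := Real.rpow_le_rpow_of_exponent_le hu1.le ht1
              simpa using this
            have h6 : C₀ * u ^ (-s) ≤ C₀ * u := mul_le_mul_of_nonneg_left h5 hC₀.le
            have h7 : C₀ * u ≤ C₀ * C₀ ^ (1 / (1 + s)) :=
              mul_le_mul_of_nonneg_left hule hC₀.le
            rw [hK]; linarith
      have hsub : (b n) ^ (-s) ≤ lam ^ (-s) + u ^ (-s) := by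
        have hbn : b n = lam + u := by rw [hu]; ring
        rw [hbn]
        exact stmt7_rpow_subadd hlam0.le hu0 ht0.le ht1
      have hone : (1:ℝ) ≤ lam ^ (-s) := Real.one_le_rpow hlam1 ht0.le
      have h8 : C₀ * (b n ^ (-s)) ≤ C₀ * (lam ^ (-s) + u ^ (-s)) :=
        mul_le_mul_of_nonneg_left hsub hC₀.le
      rw [mul_add] at h8
      have h9 : (C₀ + K) * lam ^ (-s) ≤ C * lam ^ (-s) :=
        mul_le_mul_of_nonneg_right hCK hlamrpos.le
      have h9' : C₀ * lam ^ (-s) + K * lam ^ (-s) ≤ C * lam ^ (-s) := by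
        rw [← add_mul]; exact h9
      have h10 : K * 1 ≤ K * lam ^ (-s) := mul_le_mul_of_nonneg_left hone hKpos.le
      rw [mul_one] at h10
      have hbn : b n = lam + u := by rw [hu]; ring
      linarith

lemma stmt7_sum_shift (K : ℕ) (c : ℕ → ℝ) (p : ℝ) :
    ∃ D > 0, ∀ x h : ℝ, 1 ≤ x → |h| ≤ x / 2 →
      |(∑ k ∈ Finset.range (K+1), c k * (x+h) ^ (p - k)) -
        ∑ k ∈ Finset.range (K+1), c k * x ^ (p - k)| ≤ D * x ^ (p - 1) * |h| := by
  refine ⟨(∑ k ∈ Finset.range (K+1), |c k| * (|p - k| * 2 ^ |p - k - 1|)) + 1, by positivity, ?_⟩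
  intro x h hx hh
  have hx0 : (0:ℝ) < x := lt_of_lt_of_le one_pos hx
  rw [← Finset.sum_sub_distrib]
  calc |∑ k ∈ Finset.range (K+1), (c k * (x+h) ^ (p - k) - c k * x ^ (p - k))|
      ≤ ∑ k ∈ Finset.range (K+1), |c k * (x+h) ^ (p - k) - c k * x ^ (p - k)| :=
        Finset.abs_sum_le_sum_abs _ _
    _ ≤ ∑ k ∈ Finset.range (K+1),
          (|c k| * (|p - k| * 2 ^ |p - k - 1|)) * (x ^ (p - 1) * |h|) := by
        refine Finset.sum_le_sum ?_
        intro k _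
        rw [← mul_sub, abs_mul]
        have h1 := stmt7_mvt (p - k) x h hx hh
        have h2 : x ^ (p - (k:ℝ) - 1) ≤ x ^ (p - 1) := by
          refine Real.rpow_le_rpow_of_exponent_le hx ?_
          have : (0:ℝ) ≤ (k:ℝ) := Nat.cast_nonneg k
          linarith
        have h3 : |(x + h) ^ (p - (k:ℝ)) - x ^ (p - (k:ℝ))|
            ≤ (|p - k| * 2 ^ |p - k - 1|) * (x ^ (p - 1) * |h|) := by
          refine h1.trans ?_
          rw [mul_assoc]
          refine mul_le_mul_of_nonneg_left ?_ (by positivity)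
          exact mul_le_mul_of_nonneg_right h2 (abs_nonneg h)
        calc |c k| * |(x + h) ^ (p - (k:ℝ)) - x ^ (p - (k:ℝ))|
            ≤ |c k| * ((|p - k| * 2 ^ |p - k - 1|) * (x ^ (p - 1) * |h|)) :=
              mul_le_mul_of_nonneg_left h3 (abs_nonneg _)
          _ = (|c k| * (|p - k| * 2 ^ |p - k - 1|)) * (x ^ (p - 1) * |h|) := by ring
    _ = (∑ k ∈ Finset.range (K+1), |c k| * (|p - k| * 2 ^ |p - k - 1|)) * (x ^ (p - 1) * |h|) :=
        (Finset.sum_mul _ _ _).symm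
    _ ≤ ((∑ k ∈ Finset.range (K+1), |c k| * (|p - k| * 2 ^ |p - k - 1|)) + 1)
          * (x ^ (p - 1) * |h|) := by
        refine mul_le_mul_of_nonneg_right (by linarith) (by positivity)
    _ = ((∑ k ∈ Finset.range (K+1), |c k| * (|p - k| * 2 ^ |p - k - 1|)) + 1)
          * x ^ (p - 1) * |h| := by ring

theorem stmt7 (a b : ℕ → ℝ) (s : ℝ) (hs : -1 < s)
    (ha_pos : ∀ n, 0 < a n) (hb_pos : ∀ n, 0 < b n)
    (ha_top : Tendsto a atTop atTop) (hb_top : Tendsto b atTop atTop)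
    (hclose : (fun n => a n - b n) =O[atTop] fun n => (b n) ^ (-s))
    (Na Nb : ℝ → ℕ)
    (hNa : ∀ lam, Na lam = Nat.card {n : ℕ | a n < lam})
    (hNb : ∀ lam, Nb lam = Nat.card {n : ℕ | b n < lam})
    (p r : ℝ) (K : ℕ) (c : ℕ → ℝ) (hr : r < p - K)
    (hasymp : (fun lam => (Na lam : ℝ) -
        ∑ k ∈ Finset.range (K + 1), c k * lam ^ (p - k)) =O[atTop]
      fun lam => lam ^ r) :
    (fun lam => (Nb lam : ℝ) -
        ∑ k ∈ Finset.range (K + 1), c k * lam ^ (p - k)) =O[atTop]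
      fun lam => lam ^ (max r (p - 1 - s)) := by
  -- Step 1: extract C₀, N₀ from hclose
  rw [Asymptotics.isBigO_iff] at hclose
  obtain ⟨C₀', hC₀'⟩ := hclose
  obtain ⟨N₀, hN₀⟩ := Filter.eventually_atTop.mp
    (hC₀'.and (hb_top.eventually_ge_atTop 1))
  set C₀ : ℝ := max C₀' 1 with hC₀def
  have hC₀pos : 0 < C₀ := lt_of_lt_of_le one_pos (le_max_right _ _)
  have hprop : ∀ n, N₀ ≤ n → |a n - b n| ≤ C₀ * (b n) ^ (-s) ∧ 1 ≤ b n := by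
    intro n hn
    obtain ⟨h1, h2⟩ := hN₀ n hn
    refine ⟨?_, h2⟩
    have hbr : 0 ≤ (b n) ^ (-s) := Real.rpow_nonneg (hb_pos n).le _
    have : ‖a n - b n‖ ≤ C₀' * ‖(b n) ^ (-s)‖ := h1
    rw [Real.norm_eq_abs, Real.norm_eq_abs, abs_of_nonneg hbr] at this
    refine this.trans (mul_le_mul_of_nonneg_right (le_max_left _ _) hbr)
  -- Step 2: key inclusion constants
  obtain ⟨C, hCpos, hincl⟩ := stmt7_incl a b s hs C₀ hC₀pos N₀ hprop
  -- Step 3: sum shift constant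
  obtain ⟨D, hDpos, hshift⟩ := stmt7_sum_shift K c p
  -- Step 4: Na asymptotic constant
  rw [Asymptotics.isBigO_iff] at hasymp
  obtain ⟨Ca', hCa'⟩ := hasymp
  set Ca : ℝ := max Ca' 0 with hCadef
  have hCann : 0 ≤ Ca := le_max_right _ _
  have hCa : ∀ᶠ x in atTop, |(Na x : ℝ) - ∑ k ∈ Finset.range (K + 1), c k * x ^ (p - k)|
      ≤ Ca * ‖x ^ r‖ := by
    filter_upwards [hCa'] with x hx
    rw [← Real.norm_eq_abs]
    exact hx.trans (mul_le_mul_of_nonneg_right (le_max_left _ _) (norm_nonneg _))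
  obtain ⟨La, hLa⟩ := Filter.eventually_atTop.mp hCa
  set h2r : ℝ := (2:ℝ) ^ |r| with h2rdef
  have h2rpos : 0 < h2r := Real.rpow_pos_of_pos two_pos _
  rw [Asymptotics.isBigO_iff]
  refine ⟨Ca * h2r + Ca * h2r + D * C + D * C, ?_⟩
  have e3 : ∀ᶠ lam : ℝ in atTop, 2 * C ≤ lam ^ (1 + s) :=
    (tendsto_rpow_atTop (by linarith : (0:ℝ) < 1 + s)).eventually_ge_atTop (2 * C)
  have e4 : ∀ᶠ lam : ℝ in atTop, max La 1 ≤ lam / 2 :=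
    (eventually_ge_atTop (2 * max La 1)).mono (fun lam h => by linarith)
  have e5 : ∀ᶠ lam : ℝ in atTop, ∀ n ∈ Finset.range N₀, a n < lam / 2 ∧ b n < lam / 2 := by
    refine (Filter.eventually_all_finset (Finset.range N₀)).mpr (fun i _ => ?_)
    filter_upwards [eventually_gt_atTop (2 * a i), eventually_gt_atTop (2 * b i)] with lam ha hb
    constructor <;> linarith
  filter_upwards [eventually_ge_atTop (2 * C₀ + 2), eventually_ge_atTop (1:ℝ), e3, e4, e5]
    with lam h1 h2 h3 h4 h5
  have hlam0 : (0:ℝ) < lam := by linarith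
  have hrpos : (0:ℝ) < lam ^ (-s) := Real.rpow_pos_of_pos hlam0 _
  have hCl : C * lam ^ (-s) ≤ lam / 2 := by
    have hmul := mul_le_mul_of_nonneg_right h3 hrpos.le
    have heq : lam ^ (1 + s) * lam ^ (-s) = lam := by
      rw [← Real.rpow_add hlam0]; norm_num
    rw [heq] at hmul
    linarith
  have hClpos : 0 < C * lam ^ (-s) := mul_pos hCpos hrpos
  set lamm : ℝ := lam - C * lam ^ (-s) with hlammdef
  set lamp : ℝ := lam + C * lam ^ (-s) with hlampdef
  have hlamm1 : lam / 2 ≤ lamm := by rw [hlammdef]; linarith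
  have hlamp2 : lamp ≤ 2 * lam := by rw [hlampdef]; linarith
  have hlammlam : lamm ≤ lam := by rw [hlammdef]; linarith
  have hlamlamp : lam < lamp := by rw [hlampdef]; linarith
  have hLa1 : max La 1 ≤ lamm := le_trans h4 hlamm1
  have hlamm0 : (0:ℝ) < lamm := lt_of_lt_of_le one_pos ((le_max_right _ _).trans hLa1)
  have hlamp0 : (0:ℝ) < lamp := lt_of_le_of_lt hlam0.le hlamlamp
  -- set inclusions
  have incl1 : {n : ℕ | a n < lamm} ⊆ {n : ℕ | b n < lam} := by
    intro n hn
    simp only [Set.mem_setOf_eq] at hn ⊢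
    rcases lt_or_ge n N₀ with hfr | hge
    · have := (h5 n (Finset.mem_range.mpr hfr)).2
      linarith
    · by_contra hcon
      push_neg at hcon
      have := (hincl lam h1 n hge).2 hcon
      rw [← hlammdef] at this
      linarith
  have incl2 : {n : ℕ | b n < lam} ⊆ {n : ℕ | a n < lamp} := by
    intro n hn
    simp only [Set.mem_setOf_eq] at hn ⊢
    rcases lt_or_ge n N₀ with hfr | hge
    · have := (h5 n (Finset.mem_range.mpr hfr)).1
      rw [hlampdef]; linarith
    · have := (hincl lam h1 n hge).1 hn
      rw [hlampdef]; linarith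
  -- counting comparisons
  have card1 : Na lamm ≤ Nb lam := by
    rw [hNa, hNb]; exact Nat.card_mono (stmt7_finite hb_top lam) incl1
  have card2 : Nb lam ≤ Na lamp := by
    rw [hNa, hNb]; exact Nat.card_mono (stmt7_finite ha_top lamp) incl2
  have card1R : (Na lamm : ℝ) ≤ (Nb lam : ℝ) := Nat.cast_le.mpr card1
  have card2R : (Nb lam : ℝ) ≤ (Na lamp : ℝ) := Nat.cast_le.mpr card2
  -- Na asymptotics at lamm, lamp
  have hA1 := hLa lamm ((le_max_left La 1).trans hLa1)
  have hA2 := hLa lamp (((le_max_left La 1).trans hLa1).trans (hlammlam.trans hlamlamp.le))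
  rw [Real.norm_eq_abs, abs_of_nonneg (Real.rpow_nonneg hlamm0.le r)] at hA1
  rw [Real.norm_eq_abs, abs_of_nonneg (Real.rpow_nonneg hlamp0.le r)] at hA2
  -- r-exponent comparison helper
  have helper : ∀ μ : ℝ, lam / 2 ≤ μ → μ ≤ 2 * lam → μ ^ r ≤ h2r * lam ^ r := by
    intro μ hμ1 hμ2
    have hμ0 : (0:ℝ) < μ := lt_of_lt_of_le (by linarith) hμ1
    rcases le_or_gt 0 r with hr0 | hr0
    · calc μ ^ r ≤ (2 * lam) ^ r := Real.rpow_le_rpow hμ0.le hμ2 hr0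
        _ = 2 ^ r * lam ^ r := Real.mul_rpow (by norm_num) hlam0.le
        _ ≤ h2r * lam ^ r := by
          refine mul_le_mul_of_nonneg_right
            (Real.rpow_le_rpow_of_exponent_le one_le_two (le_abs_self r))
            (Real.rpow_nonneg hlam0.le r)
    · calc μ ^ r ≤ (lam / 2) ^ r :=
            Real.rpow_le_rpow_of_nonpos (by linarith) hμ1 hr0.le
        _ = 2 ^ (-r) * lam ^ r := by
          rw [Real.div_rpow hlam0.le (by norm_num), div_eq_mul_inv,
            ← Real.rpow_neg (by norm_num : (0:ℝ) ≤ 2), mul_comm]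
        _ ≤ h2r * lam ^ r := by
          refine mul_le_mul_of_nonneg_right
            (Real.rpow_le_rpow_of_exponent_le one_le_two (neg_le_abs r))
            (Real.rpow_nonneg hlam0.le r)
  have hr1 : lamm ^ r ≤ h2r * lam ^ r := helper lamm hlamm1 (by linarith)
  have hr2 : lamp ^ r ≤ h2r * lam ^ r := helper lamp (by linarith) hlamp2
  -- sum shift bounds
  have habs : |C * lam ^ (-s)| = C * lam ^ (-s) := abs_of_nonneg hClpos.le
  have hS1 := hshift lam (-(C * lam ^ (-s))) h2 (by rw [abs_neg, habs]; exact hCl)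
  have hS2 := hshift lam (C * lam ^ (-s)) h2 (by rw [habs]; exact hCl)
  rw [abs_neg, habs] at hS1
  rw [habs] at hS2
  have hlamm_eq : lam + -(C * lam ^ (-s)) = lamm := by rw [hlammdef]; ring
  rw [hlamm_eq] at hS1
  rw [← hlampdef] at hS2
  have hDeq : D * lam ^ (p - 1) * (C * lam ^ (-s)) = D * C * lam ^ (p - 1 - s) := by
    rw [show p - 1 - s = (p - 1) + (-s) by ring, Real.rpow_add hlam0]
    ring
  rw [hDeq] at hS1 hS2
  -- exponent comparisons to max
  have hm1 : lam ^ r ≤ lam ^ (max r (p - 1 - s)) :=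
    Real.rpow_le_rpow_of_exponent_le h2 (le_max_left _ _)
  have hm2 : lam ^ (p - 1 - s) ≤ lam ^ (max r (p - 1 - s)) :=
    Real.rpow_le_rpow_of_exponent_le h2 (le_max_right _ _)
  have hmnn : 0 ≤ lam ^ (max r (p - 1 - s)) := Real.rpow_nonneg hlam0.le _
  -- final assembly
  rw [Real.norm_eq_abs, Real.norm_eq_abs, abs_of_nonneg hmnn]
  obtain ⟨hA1l, hA1r⟩ := abs_le.mp hA1
  obtain ⟨hA2l, hA2r⟩ := abs_le.mp hA2
  obtain ⟨hS1l, hS1r⟩ := abs_le.mp hS1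
  obtain ⟨hS2l, hS2r⟩ := abs_le.mp hS2
  have hCar1 : Ca * lamm ^ r ≤ Ca * (h2r * lam ^ r) := mul_le_mul_of_nonneg_left hr1 hCann
  have hCar2 : Ca * lamp ^ r ≤ Ca * (h2r * lam ^ r) := mul_le_mul_of_nonneg_left hr2 hCann
  have hmm1 : Ca * h2r * lam ^ r ≤ Ca * h2r * lam ^ (max r (p - 1 - s)) :=
    mul_le_mul_of_nonneg_left hm1 (by positivity)
  have hmm2 : D * C * lam ^ (p - 1 - s) ≤ D * C * lam ^ (max r (p - 1 - s)) :=
    mul_le_mul_of_nonneg_left hm2 (by positivity)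
  rw [← mul_assoc] at hCar1 hCar2
  have hnn1 : 0 ≤ Ca * h2r * lam ^ (max r (p - 1 - s)) := by positivity
  have hnn2 : 0 ≤ D * C * lam ^ (max r (p - 1 - s)) := by positivity
  have hexp : (Ca * h2r + Ca * h2r + D * C + D * C) * lam ^ (max r (p - 1 - s))
      = Ca * h2r * lam ^ (max r (p - 1 - s)) + Ca * h2r * lam ^ (max r (p - 1 - s))
        + D * C * lam ^ (max r (p - 1 - s)) + D * C * lam ^ (max r (p - 1 - s)) := by ring
  rw [abs_le, hexp]
  constructor
  · linarith [hA1l, hS1l, card1R, hCar1, hmm1, hmm2, hnn1, hnn2]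
  · linarith [hA2r, hS2r, card2R, hCar2, hmm1, hmm2, hnn1, hnn2]
end

section
/- G_{2,1} := ∫_0^{π/2} arccot(csc θ) · sin θ dθ = (√2 - 1)π/2. -/
open Real

/-- The principal inverse cotangent, with values in `(0, π)`. -/
noncomputable def arccot (x : ℝ) : ℝ := π / 2 - Real.arctan x

noncomputable def Faux (θ : ℝ) : ℝ :=
  -Real.cos θ * Real.arctan (Real.sin θ)
    + Real.sqrt 2 * Real.arcsin (Real.sqrt 2 * Real.sin θ / Real.sqrt (1 + Real.sin θ ^ 2))
    - θ

lemma Faux_deriv {θ : ℝ} (hc : 0 < Real.cos θ) :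
    HasDerivAt Faux (Real.arctan (Real.sin θ) * Real.sin θ) θ := by
  set s := Real.sin θ with hs
  set c := Real.cos θ with hcdef
  have hpyth : s ^ 2 + c ^ 2 = 1 := Real.sin_sq_add_cos_sq θ
  have hs2 : (0:ℝ) < 1 + s ^ 2 := by positivity
  have hA : (0:ℝ) < Real.sqrt (1 + s ^ 2) := Real.sqrt_pos.2 hs2
  have hA2 : Real.sqrt (1 + s ^ 2) ^ 2 = 1 + s ^ 2 := Real.sq_sqrt hs2.le
  have h2 : Real.sqrt 2 ^ 2 = 2 := Real.sq_sqrt (by norm_num)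
  have hsin : HasDerivAt Real.sin c θ := Real.hasDerivAt_sin θ
  have hcos : HasDerivAt Real.cos (-s) θ := Real.hasDerivAt_cos θ
  -- part 1 : -cos θ * arctan (sin θ)
  have h1 : HasDerivAt (fun x => -Real.cos x * Real.arctan (Real.sin x))
      (s * Real.arctan s + -c * (1 / (1 + s ^ 2) * c)) θ := by
    have harctan : HasDerivAt (fun x => Real.arctan (Real.sin x)) (1 / (1 + s ^ 2) * c) θ :=
      by exact (Real.hasDerivAt_arctan s).comp θ hsin
    have := hcos.neg.mul harctan
    convert this using 1
    · rfl
    · rfl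
    show s * Real.arctan s + -c * (1 / (1 + s ^ 2) * c) = - -s * Real.arctan s + -c * (1 / (1 + s ^ 2) * c)
    ring
    rfl
  -- inner function g
  have hw : HasDerivAt (fun x => 1 + Real.sin x ^ 2) (2 * s ^ 1 * c) θ := by
    simpa using (hsin.pow 2).const_add 1
  have hv : HasDerivAt (fun x => Real.sqrt (1 + Real.sin x ^ 2))
      (1 / (2 * Real.sqrt (1 + s ^ 2)) * (2 * s ^ 1 * c)) θ :=
    (Real.hasDerivAt_sqrt hs2.ne').comp θ hw
  have hu : HasDerivAt (fun x => Real.sqrt 2 * Real.sin x) (Real.sqrt 2 * c) θ :=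
    hsin.const_mul _
  have hg : HasDerivAt (fun x => Real.sqrt 2 * Real.sin x / Real.sqrt (1 + Real.sin x ^ 2))
      ((Real.sqrt 2 * c * Real.sqrt (1 + s ^ 2)
        - Real.sqrt 2 * s * (1 / (2 * Real.sqrt (1 + s ^ 2)) * (2 * s ^ 1 * c)))
        / Real.sqrt (1 + s ^ 2) ^ 2) θ :=
    hu.div hv hA.ne'
  set g : ℝ := Real.sqrt 2 * s / Real.sqrt (1 + s ^ 2) with hgdef
  have hg2 : g ^ 2 = 2 * s ^ 2 / (1 + s ^ 2) := by
    rw [hgdef, div_pow, mul_pow, h2, hA2]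
  have hs1 : s ^ 2 < 1 := by nlinarith
  have hgsq : g ^ 2 < 1 := by
    rw [hg2, div_lt_one hs2]; nlinarith
  have habs : |g| < 1 := by
    rw [← Real.sqrt_one]
    rw [show |g| = Real.sqrt (g ^ 2) by rw [Real.sqrt_sq_eq_abs]]
    exact Real.sqrt_lt_sqrt (sq_nonneg g) (by simpa using hgsq)
  have hgne1 : g ≠ 1 := by intro h; rw [h] at habs; simp at habs
  have hgnem1 : g ≠ -1 := by intro h; rw [h] at habs; simp at habs
  have harcsin : HasDerivAt Real.arcsin (1 / Real.sqrt (1 - g ^ 2)) g :=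
    Real.hasDerivAt_arcsin hgnem1 hgne1
  have h2' : HasDerivAt
      (fun x => Real.sqrt 2 * Real.arcsin (Real.sqrt 2 * Real.sin x / Real.sqrt (1 + Real.sin x ^ 2)))
      (Real.sqrt 2 * (1 / Real.sqrt (1 - g ^ 2) *
        ((Real.sqrt 2 * c * Real.sqrt (1 + s ^ 2)
          - Real.sqrt 2 * s * (1 / (2 * Real.sqrt (1 + s ^ 2)) * (2 * s ^ 1 * c)))
          / Real.sqrt (1 + s ^ 2) ^ 2))) θ :=
    ((harcsin.comp θ hg)).const_mul _
  -- simplify the arcsin part derivative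
  have hsqrt1g : Real.sqrt (1 - g ^ 2) = c / Real.sqrt (1 + s ^ 2) := by
    have : 1 - g ^ 2 = (c / Real.sqrt (1 + s ^ 2)) ^ 2 := by
      rw [hg2, div_pow, hA2]
      field_simp
      nlinarith
    rw [this, Real.sqrt_sq (by positivity)]
  have key : Real.sqrt 2 * (1 / Real.sqrt (1 - g ^ 2) *
        ((Real.sqrt 2 * c * Real.sqrt (1 + s ^ 2)
          - Real.sqrt 2 * s * (1 / (2 * Real.sqrt (1 + s ^ 2)) * (2 * s ^ 1 * c)))
          / Real.sqrt (1 + s ^ 2) ^ 2)) = 2 / (1 + s ^ 2) := by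
    have hnum : Real.sqrt 2 * c * Real.sqrt (1 + s ^ 2)
        - Real.sqrt 2 * s * (1 / (2 * Real.sqrt (1 + s ^ 2)) * (2 * s ^ 1 * c))
        = Real.sqrt 2 * c / Real.sqrt (1 + s ^ 2) := by
      rw [pow_one, eq_div_iff hA.ne']
      field_simp
      linear_combination hA2
    rw [hnum, hsqrt1g, hA2]
    rw [div_div]
    field_simp
    linear_combination h2
  rw [key] at h2'
  have htotal := (h1.add h2').sub (hasDerivAt_id θ)
  have : s * Real.arctan s + -c * (1 / (1 + s ^ 2) * c) + 2 / (1 + s ^ 2) - 1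
      = Real.arctan s * s := by
    field_simp
    nlinarith [Real.arctan s]
  rw [this] at htotal
  exact htotal

theorem stmt8 :
    ∫ θ in (0:ℝ)..(π / 2), arccot (1 / Real.sin θ) * Real.sin θ
      = (Real.sqrt 2 - 1) * π / 2 := by
  have hpi : (0:ℝ) ≤ π / 2 := by positivity
  -- rewrite the integrand
  have hcongr : Set.EqOn (fun θ => arccot (1 / Real.sin θ) * Real.sin θ)
      (fun θ => Real.arctan (Real.sin θ) * Real.sin θ) (Set.uIcc 0 (π / 2)) := by
    intro θ hθ
    rw [Set.uIcc_of_le hpi] at hθ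
    rcases eq_or_lt_of_le (Real.sin_nonneg_of_mem_Icc
      (Set.Icc_subset_Icc le_rfl (by linarith [Real.pi_pos]) hθ)) with h | h
    · simp [← h]
    · simp only [arccot]
      rw [one_div, Real.arctan_inv_of_pos h]
      ring_nf
  rw [intervalIntegral.integral_congr hcongr]
  -- FTC
  have hcontF : ContinuousOn Faux (Set.Icc 0 (π / 2)) := by
    apply Continuous.continuousOn
    unfold Faux
    have hinner : Continuous fun x => Real.sqrt 2 * Real.sin x / Real.sqrt (1 + Real.sin x ^ 2) := by
      apply Continuous.div (by fun_prop) (by fun_prop)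
      intro x
      exact (Real.sqrt_pos.2 (by positivity)).ne'
    exact ((Real.continuous_cos.neg.mul
      (Real.continuous_arctan.comp Real.continuous_sin)).add
      (continuous_const.mul (Real.continuous_arcsin.comp hinner))).sub continuous_id
  have hderiv : ∀ x ∈ Set.Ioo (0:ℝ) (π / 2),
      HasDerivWithinAt Faux (Real.arctan (Real.sin x) * Real.sin x) (Set.Ioi x) x := by
    intro x hx
    have hc : 0 < Real.cos x :=
      Real.cos_pos_of_mem_Ioo ⟨by linarith [Real.pi_pos, hx.1], hx.2⟩
    exact (Faux_deriv hc).hasDerivWithinAt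
  have hint : IntervalIntegrable (fun θ => Real.arctan (Real.sin θ) * Real.sin θ)
      MeasureTheory.volume 0 (π / 2) :=
    ((Real.continuous_arctan.comp Real.continuous_sin).mul Real.continuous_sin).intervalIntegrable _ _
  rw [intervalIntegral.integral_eq_sub_of_hasDeriv_right_of_le hpi hcontF hderiv hint]
  -- evaluate
  have h2 : Real.sqrt (1 + Real.sin (π / 2) ^ 2) = Real.sqrt 2 := by
    rw [Real.sin_pi_div_two]; norm_num
  have hFb : Faux (π / 2) = Real.sqrt 2 * (π / 2) - π / 2 := by
    unfold Faux
    rw [Real.cos_pi_div_two, h2, Real.sin_pi_div_two, mul_one,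
      div_self (Real.sqrt_pos.2 (by norm_num : (0:ℝ) < 2)).ne', Real.arcsin_one]
    ring
  have hFa : Faux 0 = 0 := by
    unfold Faux
    simp [Real.arcsin_zero]
  rw [hFb, hFa]
  ring
end

section
/- G_{3,1} := ∫_0^{π/2} ∫_0^{π/2} arccot(csc θ₁ · csc θ₂) · sin θ₁ · sin² θ₂ dθ₁ dθ₂ = (π - 2)π/8. -/
open Real

noncomputable def Hfun (s a : ℝ) : ℝ :=
  -Real.cos a * Real.arctan (s * Real.sin a)
    + (Real.sqrt (1 + s ^ 2) / s) *
      (a + Real.arctan ((Real.sqrt (1 + s ^ 2) - 1) * (Real.sin a * Real.cos a) /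
        (Real.cos a ^ 2 + Real.sqrt (1 + s ^ 2) * Real.sin a ^ 2)))
    - a / s

lemma hasDerivAt_Hfun (s : ℝ) (hs : 0 < s) (a : ℝ) :
    HasDerivAt (Hfun s) (Real.arctan (s * Real.sin a) * Real.sin a) a := by
  set r := Real.sqrt (1 + s ^ 2) with hrdef
  have hr2 : r ^ 2 = 1 + s ^ 2 := Real.sq_sqrt (by positivity)
  have hr1 : 1 ≤ r := by
    rw [hrdef]
    nlinarith [Real.sq_sqrt (show (0:ℝ) ≤ 1 + s ^ 2 by positivity),
      Real.sqrt_nonneg (1 + s ^ 2)]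
  have hpy : Real.sin a ^ 2 + Real.cos a ^ 2 = 1 := Real.sin_sq_add_cos_sq a
  have hDnpos : 0 < Real.cos a ^ 2 + r * Real.sin a ^ 2 := by
    nlinarith [sq_nonneg (Real.sin a), sq_nonneg (Real.cos a)]
  have hsin : HasDerivAt Real.sin (Real.cos a) a := Real.hasDerivAt_sin a
  have hcos : HasDerivAt Real.cos (-Real.sin a) a := Real.hasDerivAt_cos a
  have hssin : HasDerivAt (fun x => s * Real.sin x) (s * Real.cos a) a := hsin.const_mul s
  have harc1 : HasDerivAt (fun x => Real.arctan (s * Real.sin x))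
      ((1 / (1 + (s * Real.sin a) ^ 2)) * (s * Real.cos a)) a :=
    (Real.hasDerivAt_arctan _).comp a hssin
  have hN : HasDerivAt (fun x => (r - 1) * (Real.sin x * Real.cos x))
      ((r - 1) * (Real.cos a * Real.cos a + Real.sin a * -Real.sin a)) a :=
    (hsin.mul hcos).const_mul (r - 1)
  have hDn : HasDerivAt (fun x => Real.cos x ^ 2 + r * Real.sin x ^ 2)
      (2 * Real.cos a ^ 1 * -Real.sin a + r * (2 * Real.sin a ^ 1 * Real.cos a)) a :=
    (hcos.pow 2).add ((hsin.pow 2).const_mul r)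
  have hg : HasDerivAt (fun x => (r - 1) * (Real.sin x * Real.cos x) /
      (Real.cos x ^ 2 + r * Real.sin x ^ 2))
      (((r - 1) * (Real.cos a * Real.cos a + Real.sin a * -Real.sin a) *
          (Real.cos a ^ 2 + r * Real.sin a ^ 2) -
        (r - 1) * (Real.sin a * Real.cos a) *
          (2 * Real.cos a ^ 1 * -Real.sin a + r * (2 * Real.sin a ^ 1 * Real.cos a))) /
        (Real.cos a ^ 2 + r * Real.sin a ^ 2) ^ 2) a :=
    hN.div hDn hDnpos.ne'
  have harcg := (Real.hasDerivAt_arctan _).comp a hg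
  have hfull : HasDerivAt (Hfun s)
      ((- -Real.sin a * Real.arctan (s * Real.sin a) +
          -Real.cos a * ((1 / (1 + (s * Real.sin a) ^ 2)) * (s * Real.cos a))) +
        (r / s) * (1 + (1 / (1 + ((r - 1) * (Real.sin a * Real.cos a) /
            (Real.cos a ^ 2 + r * Real.sin a ^ 2)) ^ 2) *
          (((r - 1) * (Real.cos a * Real.cos a + Real.sin a * -Real.sin a) *
              (Real.cos a ^ 2 + r * Real.sin a ^ 2) -
            (r - 1) * (Real.sin a * Real.cos a) *
              (2 * Real.cos a ^ 1 * -Real.sin a + r * (2 * Real.sin a ^ 1 * Real.cos a))) /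
            (Real.cos a ^ 2 + r * Real.sin a ^ 2) ^ 2))) - 1 / s) a := by
    unfold Hfun
    rw [← hrdef]
    exact ((hcos.neg.mul harc1).add (((hasDerivAt_id a).add harcg).const_mul (r / s))).sub
      ((hasDerivAt_id a).div_const s)
  have heq : (- -Real.sin a * Real.arctan (s * Real.sin a) +
        -Real.cos a * ((1 / (1 + (s * Real.sin a) ^ 2)) * (s * Real.cos a))) +
      (r / s) * (1 + (1 / (1 + ((r - 1) * (Real.sin a * Real.cos a) /
          (Real.cos a ^ 2 + r * Real.sin a ^ 2)) ^ 2) *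
        (((r - 1) * (Real.cos a * Real.cos a + Real.sin a * -Real.sin a) *
            (Real.cos a ^ 2 + r * Real.sin a ^ 2) -
          (r - 1) * (Real.sin a * Real.cos a) *
            (2 * Real.cos a ^ 1 * -Real.sin a + r * (2 * Real.sin a ^ 1 * Real.cos a))) /
          (Real.cos a ^ 2 + r * Real.sin a ^ 2) ^ 2))) - 1 / s
      = Real.arctan (s * Real.sin a) * Real.sin a := by
    set si := Real.sin a with hsi
    set co := Real.cos a with hco
    have hs' : s ≠ 0 := hs.ne'
    have h1 : (1:ℝ) + (s * si) ^ 2 ≠ 0 := by positivity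
    have h2 : co ^ 2 + r * si ^ 2 ≠ 0 := hDnpos.ne'
    have h3 : (1:ℝ) + ((r - 1) * (si * co) / (co ^ 2 + r * si ^ 2)) ^ 2 ≠ 0 := by positivity
    have h2' : co ^ 2 + si ^ 2 * r ≠ 0 := by rw [mul_comm]; exact h2
    field_simp
    linear_combination (co^4 + si^2*co^2) * hr2 + (-s^2*co^4 - s^2*si^2*co^2) * hpy
  rwa [heq] at hfull

lemma inner_integral (s : ℝ) (hs : 0 < s) :
    ∫ a in (0:ℝ)..(π / 2), Real.arctan (s * Real.sin a) * Real.sin a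
      = π / (2 * s) * (Real.sqrt (1 + s ^ 2) - 1) := by
  rw [intervalIntegral.integral_eq_sub_of_hasDerivAt
    (f := Hfun s) (fun x _ => hasDerivAt_Hfun s hs x)
    (((Real.continuous_arctan.comp
        (continuous_const.mul Real.continuous_sin)).mul
      Real.continuous_sin).intervalIntegrable _ _)]
  unfold Hfun
  simp
  field_simp

noncomputable def Bfun (b : ℝ) : ℝ :=
  π / 2 * (Real.cos b - Real.cos b * Real.sqrt (1 + Real.sin b ^ 2) / 2
    - Real.arcsin (Real.cos b / Real.sqrt 2))

lemma hasDerivAt_Bfun (b : ℝ) :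
    HasDerivAt Bfun (π / 2 * (Real.sin b * (Real.sqrt (1 + Real.sin b ^ 2) - 1))) b := by
  have hwpos : 0 < Real.sqrt (1 + Real.sin b ^ 2) := Real.sqrt_pos.mpr (by positivity)
  have hw2 : Real.sqrt (1 + Real.sin b ^ 2) ^ 2 = 1 + Real.sin b ^ 2 :=
    Real.sq_sqrt (by positivity)
  have h22 : Real.sqrt 2 ^ 2 = 2 := Real.sq_sqrt (by norm_num)
  have h2pos : (0:ℝ) < Real.sqrt 2 := Real.sqrt_pos.mpr (by norm_num)
  have hpy : Real.sin b ^ 2 + Real.cos b ^ 2 = 1 := Real.sin_sq_add_cos_sq b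
  have hc1 : Real.cos b ≤ 1 := Real.cos_le_one b
  have hc2 : -1 ≤ Real.cos b := Real.neg_one_le_cos b
  have hne1 : Real.cos b / Real.sqrt 2 ≠ 1 := by
    intro h
    rw [div_eq_one_iff_eq h2pos.ne'] at h
    nlinarith
  have hnem1 : Real.cos b / Real.sqrt 2 ≠ -1 := by
    intro h
    rw [div_eq_iff h2pos.ne'] at h
    nlinarith
  have hsin : HasDerivAt Real.sin (Real.cos b) b := Real.hasDerivAt_sin b
  have hcos : HasDerivAt Real.cos (-Real.sin b) b := Real.hasDerivAt_cos b
  have hsqrt : HasDerivAt (fun x => Real.sqrt (1 + Real.sin x ^ 2))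
      (1 / (2 * Real.sqrt (1 + Real.sin b ^ 2)) * (2 * Real.sin b ^ 1 * Real.cos b)) b :=
    (Real.hasDerivAt_sqrt (by positivity)).comp b ((hsin.pow 2).const_add 1)
  have harcsin : HasDerivAt (fun x => Real.arcsin (Real.cos x / Real.sqrt 2))
      (1 / Real.sqrt (1 - (Real.cos b / Real.sqrt 2) ^ 2) * (-Real.sin b / Real.sqrt 2)) b :=
    HasDerivAt.comp (h₂ := Real.arcsin) b (Real.hasDerivAt_arcsin hnem1 hne1) (hcos.div_const (Real.sqrt 2))
  have hkey : Real.sqrt (1 - (Real.cos b / Real.sqrt 2) ^ 2)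
      = Real.sqrt (1 + Real.sin b ^ 2) / Real.sqrt 2 := by
    rw [← Real.sqrt_div (by positivity)]
    congr 1
    rw [div_pow, h22]
    field_simp
    linarith
  rw [hkey] at harcsin
  have hfull : HasDerivAt Bfun
      ((-Real.sin b - (-Real.sin b * Real.sqrt (1 + Real.sin b ^ 2) +
          Real.cos b * (1 / (2 * Real.sqrt (1 + Real.sin b ^ 2)) *
            (2 * Real.sin b ^ 1 * Real.cos b))) / 2 -
        1 / (Real.sqrt (1 + Real.sin b ^ 2) / Real.sqrt 2) * (-Real.sin b / Real.sqrt 2)) *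
        (π / 2)) b := by
    unfold Bfun
    have := (((hcos.sub ((hcos.mul hsqrt).div_const 2)).sub harcsin)).const_mul (π / 2)
    simpa [mul_comm] using this
  have heq : (-Real.sin b - (-Real.sin b * Real.sqrt (1 + Real.sin b ^ 2) +
          Real.cos b * (1 / (2 * Real.sqrt (1 + Real.sin b ^ 2)) *
            (2 * Real.sin b ^ 1 * Real.cos b))) / 2 -
        1 / (Real.sqrt (1 + Real.sin b ^ 2) / Real.sqrt 2) * (-Real.sin b / Real.sqrt 2)) *
        (π / 2)
      = π / 2 * (Real.sin b * (Real.sqrt (1 + Real.sin b ^ 2) - 1)) := by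
    set w := Real.sqrt (1 + Real.sin b ^ 2)
    field_simp
    linear_combination (-Real.sin b) * hw2 + (-Real.sin b) * hpy
  rwa [heq] at hfull

theorem stmt9 :
    ∫ θ₂ in (0:ℝ)..(π / 2), ∫ θ₁ in (0:ℝ)..(π / 2),
        arccot ((1 / Real.sin θ₁) * (1 / Real.sin θ₂)) *
          Real.sin θ₁ * (Real.sin θ₂) ^ 2
      = (π - 2) * π / 8 := by
  have hpi : (0:ℝ) ≤ π / 2 := by positivity
  have hcongr : (∫ θ₂ in (0:ℝ)..(π / 2), ∫ θ₁ in (0:ℝ)..(π / 2),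
        arccot ((1 / Real.sin θ₁) * (1 / Real.sin θ₂)) *
          Real.sin θ₁ * (Real.sin θ₂) ^ 2)
      = ∫ b in (0:ℝ)..(π / 2),
          π / 2 * (Real.sin b * (Real.sqrt (1 + Real.sin b ^ 2) - 1)) := by
    apply intervalIntegral.integral_congr_ae
    apply MeasureTheory.ae_of_all
    intro b hb
    rw [Set.uIoc_of_le hpi] at hb
    have hbpi : b < π := lt_of_le_of_lt hb.2 (by linarith [Real.pi_pos])
    have hsb : 0 < Real.sin b := Real.sin_pos_of_pos_of_lt_pi hb.1 hbpi
    have hstep : (∫ θ₁ in (0:ℝ)..(π / 2),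
        arccot ((1 / Real.sin θ₁) * (1 / Real.sin b)) *
          Real.sin θ₁ * (Real.sin b) ^ 2)
        = ∫ a in (0:ℝ)..(π / 2),
            Real.arctan (Real.sin b * Real.sin a) * Real.sin a * Real.sin b ^ 2 := by
      apply intervalIntegral.integral_congr_ae
      apply MeasureTheory.ae_of_all
      intro a ha
      rw [Set.uIoc_of_le hpi] at ha
      have hapi : a < π := lt_of_le_of_lt ha.2 (by linarith [Real.pi_pos])
      have hsa : 0 < Real.sin a := Real.sin_pos_of_pos_of_lt_pi ha.1 hapi
      have hx : 0 < Real.sin a * Real.sin b := mul_pos hsa hsb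
      have h1 : (1 / Real.sin a) * (1 / Real.sin b) = (Real.sin a * Real.sin b)⁻¹ := by
        rw [one_div, one_div, mul_inv]
      unfold arccot
      rw [h1, Real.arctan_inv_of_pos hx, mul_comm (Real.sin b)]
      ring
    rw [hstep, intervalIntegral.integral_mul_const, inner_integral (Real.sin b) hsb]
    field_simp
  rw [hcongr, intervalIntegral.integral_eq_sub_of_hasDerivAt
    (fun x _ => hasDerivAt_Bfun x)
    ((continuous_const.mul (Real.continuous_sin.mul
      ((Real.continuous_sqrt.comp
        (continuous_const.add (Real.continuous_sin.pow 2))).sub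
      continuous_const))).intervalIntegrable _ _)]
  have harc : Real.arcsin (1 / Real.sqrt 2) = π / 4 := by
    have h12 : (1:ℝ) / Real.sqrt 2 = Real.sin (π / 4) := by
      rw [Real.sin_pi_div_four]
      rw [div_eq_div_iff (by positivity) (by norm_num)]
      nlinarith [Real.sq_sqrt (show (0:ℝ) ≤ 2 by norm_num), Real.sqrt_nonneg 2]
    rw [h12, Real.arcsin_sin (by linarith [Real.pi_pos]) (by linarith [Real.pi_pos])]
  have harc' : Real.arcsin (Real.sqrt 2)⁻¹ = π / 4 := by rw [← one_div]; exact harc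
  unfold Bfun
  simp [harc']
  ring
end

section
/- For every integer d ≥ 3, the constant C₂ = 2^{(d-2)/2} ω_{d-2}/(2π)^{d-2} − 2G_{d-1,1}/π^{d-1} − ω_{d-2}/(2(2π)^{d-2}) is strictly positive, where ω_{d-2} = π^{(d-2)/2}/Γ(d/2) is the volume of the unit ball in ℝ^{d-2} and G_{d-1,1} is the iterated integral ∫_0^{π/2}⋯∫_0^{π/2} arccot(∏_{j=1}^{d-2} csc θ_j) ∏_{k=1}^{d-2} sin^k(θ_k) dθ₁⋯dθ_{d-2}. -/
open Real MeasureTheory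

namespace Stmt12Aux

noncomputable def I (m : ℕ) : ℝ := ∫ x in (0:ℝ)..(π/2), Real.sin x ^ m

lemma I_zero : I 0 = π / 2 := by simp [I]

lemma I_one : I 1 = 1 := by simp [I]

lemma I_rec (m : ℕ) : I (m + 2) = ((m : ℝ) + 1) / ((m : ℝ) + 2) * I m := by
  rw [I, integral_sin_pow]
  simp [I]

lemma I_nonneg (m : ℕ) : 0 ≤ I m := by
  apply intervalIntegral.integral_nonneg (by positivity)
  intro x hx
  exact pow_nonneg (Real.sin_nonneg_of_nonneg_of_le_pi hx.1
    (hx.2.trans (by linarith [Real.pi_pos]))) m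

lemma I_succ_le (m : ℕ) : I (m + 1) ≤ I m := by
  apply intervalIntegral.integral_mono_on (by positivity)
    (Continuous.intervalIntegrable (by fun_prop) _ _)
    (Continuous.intervalIntegrable (by fun_prop) _ _)
  intro x hx
  exact pow_le_pow_of_le_one
    (Real.sin_nonneg_of_nonneg_of_le_pi hx.1 (hx.2.trans (by linarith [Real.pi_pos])))
    (Real.sin_le_one x) (Nat.le_succ m)

lemma J : ∀ m : ℕ, I m * I (m + 1) = π / (2 * ((m : ℝ) + 1))
  | 0 => by rw [I_zero, I_one]; norm_num
  | (m + 1) => by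
      have h := J m
      have h2 : ((m : ℝ) + 2) ≠ 0 := by positivity
      calc I (m + 1) * I (m + 2)
          = ((m : ℝ) + 1) / ((m : ℝ) + 2) * (I m * I (m + 1)) := by rw [I_rec]; ring
        _ = π / (2 * ((m : ℝ) + 1 + 1)) := by
            rw [h]
            have h1 : ((m : ℝ) + 1) ≠ 0 := by positivity
            field_simp
            ring
      push_cast
      ring_nf

lemma I_sq (m : ℕ) : I (m + 1) ^ 2 ≤ π / (2 * ((m : ℝ) + 1)) := by
  have h := J m
  nlinarith [I_succ_le m, I_nonneg (m + 1)]

lemma Icc_eq (m : ℕ) : ∫ x in Set.Icc (0:ℝ) (π/2), Real.sin x ^ m = I m := by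
  rw [I, intervalIntegral.integral_of_le (by positivity),
    MeasureTheory.integral_Icc_eq_integral_Ioc]

lemma prod_range (n : ℕ) :
    ∏ k ∈ Finset.range n, (2 * ((k : ℝ) + 2)) = 2 ^ n * (Nat.factorial (n + 1) : ℝ) := by
  induction n with
  | zero => simp
  | succ n ih =>
      rw [Finset.prod_range_succ, ih, Nat.factorial_succ (n+1), Nat.factorial_succ n]
      push_cast
      ring

lemma I_sq2 (k : ℕ) : I (k + 2) ^ 2 ≤ π / (2 * ((k : ℝ) + 2)) := by
  have h := I_sq (k + 1)
  have e : (((k + 1 : ℕ) : ℝ)) + 1 = (k : ℝ) + 2 := by push_cast; ring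
  rw [e] at h
  exact h

end Stmt12Aux

set_option maxHeartbeats 1000000 in
theorem stmt12 (d : ℕ) (hd : 3 ≤ d)
    (ω G : ℝ)
    (hω : ω = π ^ (((d : ℝ) - 2) / 2) / Real.Gamma (d / 2))
    (hG : G = ∫ θ : Fin (d - 2) → ℝ in Set.univ.pi fun _ => Set.Icc 0 (π / 2),
        arccot (∏ j : Fin (d - 2), 1 / Real.sin (θ j)) *
          ∏ k : Fin (d - 2), (Real.sin (θ k)) ^ (k.1 + 1)) :
    0 < (2 : ℝ) ^ (((d : ℝ) - 2) / 2) * ω / (2 * π) ^ (d - 2)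
        - 2 * G / π ^ (d - 1) - ω / (2 * (2 * π) ^ (d - 2)) := by
  have hpi := Real.pi_pos
  set n := d - 2 with hn
  have hdn : d = n + 2 := by omega
  have hn1 : 1 ≤ n := by omega
  rw [hω]
  have hd1 : d - 1 = n + 1 := by omega
  rw [hd1]
  set Γ : ℝ := Real.Gamma ((d : ℝ) / 2) with hΓdef
  set s : ℝ := (2 : ℝ) ^ (((d : ℝ) - 2) / 2) with hs
  set w : ℝ := π ^ (((d : ℝ) - 2) / 2) with hw
  -- basic facts on the set
  set S : Set ℝ := Set.Icc (0 : ℝ) (π / 2) with hS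
  have hSm : MeasurableSet S := measurableSet_Icc
  have hpiM : MeasurableSet (Set.univ.pi fun _ : Fin n => S) :=
    MeasurableSet.univ_pi fun _ => hSm
  have hcont : Continuous fun θ : Fin n → ℝ => ∏ k : Fin n, Real.sin (θ k) ^ (k.1 + 2) := by
    fun_prop
  have hint : IntegrableOn (fun θ : Fin n → ℝ => ∏ k : Fin n, Real.sin (θ k) ^ (k.1 + 2))
      (Set.univ.pi fun _ : Fin n => S) :=
    hcont.continuousOn.integrableOn_compact (isCompact_univ_pi fun _ => isCompact_Icc)
  -- G is at most the integral of the product of sin powers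
  have hGP : G ≤ ∫ θ : Fin n → ℝ in Set.univ.pi fun _ => S,
      ∏ k : Fin n, Real.sin (θ k) ^ (k.1 + 2) := by
    rw [hG]
    apply MeasureTheory.integral_mono_of_nonneg ?_ hint ?_
    · filter_upwards [MeasureTheory.ae_restrict_mem hpiM] with θ hθ
      have h1 : Real.arctan (∏ j : Fin n, 1 / Real.sin (θ j)) < π / 2 :=
        Real.arctan_lt_pi_div_two _
      apply mul_nonneg (by unfold arccot; linarith)
      refine Finset.prod_nonneg fun k _ => pow_nonneg ?_ _
      have hk := Set.mem_univ_pi.mp hθ k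
      exact Real.sin_nonneg_of_nonneg_of_le_pi hk.1 (hk.2.trans (by linarith))
    · filter_upwards [MeasureTheory.ae_restrict_mem hpiM] with θ hθ
      have hmem : ∀ j : Fin n, θ j ∈ S := Set.mem_univ_pi.mp hθ
      have hsnn : ∀ j : Fin n, 0 ≤ Real.sin (θ j) := fun j =>
        Real.sin_nonneg_of_nonneg_of_le_pi (hmem j).1 ((hmem j).2.trans (by linarith))
      by_cases hall : ∀ j : Fin n, 0 < Real.sin (θ j)
      · have htpos : 0 < ∏ j : Fin n, Real.sin (θ j) := Finset.prod_pos fun j _ => hall j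
        have hinv : (∏ j : Fin n, 1 / Real.sin (θ j)) = (∏ j : Fin n, Real.sin (θ j))⁻¹ := by
          rw [← Finset.prod_inv_distrib]; simp [one_div]
        have harc : arccot (∏ j : Fin n, 1 / Real.sin (θ j))
            = Real.arctan (∏ j : Fin n, Real.sin (θ j)) := by
          rw [hinv]; unfold arccot; rw [Real.arctan_inv_of_pos htpos]; ring
        have hle : Real.arctan (∏ j : Fin n, Real.sin (θ j)) ≤ ∏ j : Fin n, Real.sin (θ j) := by
          have hap : 0 < Real.arctan (∏ j : Fin n, Real.sin (θ j)) := by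
            have := Real.arctan_strictMono htpos
            rwa [Real.arctan_zero] at this
          have h2 := Real.lt_tan hap (Real.arctan_lt_pi_div_two _)
          rw [Real.tan_arctan] at h2
          linarith
        rw [harc]
        calc Real.arctan (∏ j : Fin n, Real.sin (θ j)) * ∏ k : Fin n, Real.sin (θ k) ^ (k.1 + 1)
            ≤ (∏ j : Fin n, Real.sin (θ j)) * ∏ k : Fin n, Real.sin (θ k) ^ (k.1 + 1) :=
              mul_le_mul_of_nonneg_right hle
                (Finset.prod_nonneg fun k _ => pow_nonneg (hsnn k) _)
          _ = ∏ k : Fin n, Real.sin (θ k) ^ (k.1 + 2) := by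
              rw [← Finset.prod_mul_distrib]
              exact Finset.prod_congr rfl fun k _ => by ring
      · push_neg at hall
        obtain ⟨j, hj⟩ := hall
        have hj0 : Real.sin (θ j) = 0 := le_antisymm hj (hsnn j)
        have hz : (∏ k : Fin n, Real.sin (θ k) ^ (k.1 + 1)) = 0 :=
          Finset.prod_eq_zero (Finset.mem_univ j) (by rw [hj0]; simp)
        rw [hz, mul_zero]
        exact Finset.prod_nonneg fun k _ => pow_nonneg (hsnn k) _
  -- Fubini: the integral of the product equals the product of the integrals
  have key : ∀ θ : Fin n → ℝ,
      (Set.univ.pi fun _ : Fin n => S).indicator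
        (fun θ => ∏ k : Fin n, Real.sin (θ k) ^ (k.1 + 2)) θ
      = ∏ k : Fin n, S.indicator (fun x => Real.sin x ^ (k.1 + 2)) (θ k) := by
    intro θ
    by_cases hθ : θ ∈ Set.univ.pi fun _ : Fin n => S
    · rw [Set.indicator_of_mem hθ]
      exact Finset.prod_congr rfl fun k _ =>
        (Set.indicator_of_mem (Set.mem_univ_pi.mp hθ k) (fun x => Real.sin x ^ (k.1 + 2))).symm
    · rw [Set.indicator_of_notMem hθ]
      obtain ⟨j, hj⟩ := not_forall.mp (fun h => hθ (Set.mem_univ_pi.mpr h))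
      exact (Finset.prod_eq_zero (Finset.mem_univ j)
        (Set.indicator_of_notMem hj _)).symm
  have hH : (∫ θ : Fin n → ℝ in Set.univ.pi fun _ => S,
      ∏ k : Fin n, Real.sin (θ k) ^ (k.1 + 2)) = ∏ k : Fin n, Stmt12Aux.I (k.1 + 2) := by
    rw [← MeasureTheory.integral_indicator hpiM]
    simp_rw [key]
    rw [MeasureTheory.integral_fintype_prod_volume_eq_prod
      (f := fun (k : Fin n) (x : ℝ) => S.indicator (fun x => Real.sin x ^ (k.1 + 2)) x)]
    refine Finset.prod_congr rfl fun k _ => ?_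
    rw [MeasureTheory.integral_indicator hSm]
    exact Stmt12Aux.Icc_eq _
  rw [hH] at hGP
  set P : ℝ := ∏ k : Fin n, Stmt12Aux.I (k.1 + 2) with hP
  have hPnn : 0 ≤ P := Finset.prod_nonneg fun k _ => Stmt12Aux.I_nonneg _
  have hPsq : P ^ 2 ≤ π ^ n / (2 ^ n * (Nat.factorial (n + 1) : ℝ)) := by
    have h1 : P ^ 2 ≤ ∏ k : Fin n, (π / (2 * ((k.1 : ℝ) + 2))) := by
      rw [hP, ← Finset.prod_pow]
      exact Finset.prod_le_prod (fun k _ => sq_nonneg _) fun k _ => Stmt12Aux.I_sq2 k.1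
    have h3 : (∏ k : Fin n, (π / (2 * ((k.1 : ℝ) + 2))))
        = π ^ n / (2 ^ n * (Nat.factorial (n + 1) : ℝ)) := by
      rw [Finset.prod_div_distrib, Finset.prod_const, Finset.card_univ, Fintype.card_fin]
      congr 1
      rw [Fin.prod_univ_eq_prod_range (fun k => 2 * ((k : ℝ) + 2))]
      exact Stmt12Aux.prod_range n
    rw [h3] at h1
    exact h1
  -- Gamma facts
  have hΓpos : 0 < Γ := Real.Gamma_pos_of_pos (by positivity)
  have hfpos : (0 : ℝ) < (Nat.factorial n : ℝ) := by
    exact_mod_cast Nat.factorial_pos n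
  have hΓsq : Γ ^ 2 ≤ (Nat.factorial n : ℝ) := by
    have hc := Real.convexOn_log_Gamma.2 (Set.mem_Ioi.mpr one_pos)
      (Set.mem_Ioi.mpr (by positivity : (0 : ℝ) < (n : ℝ) + 1))
      (by norm_num : (0:ℝ) ≤ 1/2) (by norm_num : (0:ℝ) ≤ 1/2) (by norm_num)
    simp only [smul_eq_mul, Function.comp_apply] at hc
    rw [Real.Gamma_one, Real.log_one] at hc
    have hmid : (1/2 : ℝ) * 1 + (1/2) * ((n : ℝ) + 1) = (d : ℝ) / 2 := by
      rw [hdn]; push_cast; ring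
    rw [hmid] at hc
    have hΓn : Real.Gamma ((n : ℝ) + 1) = (Nat.factorial n : ℝ) := by
      exact_mod_cast Real.Gamma_nat_eq_factorial n
    rw [hΓn] at hc
    have h2 : Real.log (Γ ^ 2) ≤ Real.log (Nat.factorial n : ℝ) := by
      rw [Real.log_pow]; push_cast; rw [hΓdef]; linarith
    exact (Real.log_le_log_iff (by positivity) hfpos).mp h2
  -- rpow facts
  have hcast2 : ((d : ℝ) - 2) / 2 = (n : ℝ) / 2 := by rw [hdn]; push_cast; ring
  have hs1 : 1 ≤ s := Real.one_le_rpow (by norm_num) (by rw [hcast2]; positivity)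
  have hssq : s ^ 2 = 2 ^ n := by
    rw [hs, hcast2, ← Real.rpow_natCast ((2:ℝ) ^ ((n : ℝ)/2)) 2,
      ← Real.rpow_mul (by norm_num : (0:ℝ) ≤ 2)]
    rw [show (n : ℝ)/2 * ((2 : ℕ) : ℝ) = (n : ℝ) by push_cast; ring]
    exact Real.rpow_natCast 2 n
  have hwpos : 0 < w := Real.rpow_pos_of_pos hpi _
  have hwsq : w ^ 2 = π ^ n := by
    rw [hw, hcast2, ← Real.rpow_natCast (π ^ ((n : ℝ)/2)) 2,
      ← Real.rpow_mul hpi.le]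
    rw [show (n : ℝ)/2 * ((2 : ℕ) : ℝ) = (n : ℝ) by push_cast; ring]
    exact Real.rpow_natCast π n
  have hsg : (0:ℝ) < s - 1/2 := by linarith
  -- main numeric inequality
  have hpisq : (9 : ℝ) < π ^ 2 := by nlinarith [Real.pi_gt_three]
  have hn2 : (2 : ℝ) ≤ (n : ℝ) + 1 := by
    have : (1 : ℝ) ≤ (n : ℝ) := by exact_mod_cast hn1
    linarith
  have hs2 : (2:ℝ) ^ n ≤ 4 * (s - 1/2) ^ 2 := by nlinarith [hssq, hs1, sq_nonneg (s - 1)]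
  have hXpos : (0:ℝ) < (s - 1/2) ^ 2 := by positivity
  have h2np : (0:ℝ) < 2 ^ n := by positivity
  have hπnp : (0:ℝ) < π ^ n := by positivity
  have hmain : π ^ n / (2 ^ n * (Nat.factorial (n + 1) : ℝ))
      < (s - 1/2) ^ 2 * π ^ (n + 2) / (Γ ^ 2 * 4 ^ (n + 1)) := by
    rw [div_lt_div_iff₀ (by positivity) (by positivity)]
    have hfs : (Nat.factorial (n + 1) : ℝ) = ((n : ℝ) + 1) * (Nat.factorial n : ℝ) := by
      rw [Nat.factorial_succ]; push_cast; ring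
    have h4 : (4:ℝ) ^ (n + 1) = 4 * (2 ^ n * 2 ^ n) := by
      rw [show (4:ℝ) = 2 * 2 by norm_num, mul_pow]; ring
    have hπn2 : (π : ℝ) ^ (n + 2) = π ^ n * π ^ 2 := by ring
    rw [hfs, h4, hπn2]
    have h18 : 18 ≤ π ^ 2 * ((n : ℝ) + 1) := by nlinarith [hpisq, hn2]
    calc π ^ n * (Γ ^ 2 * (4 * (2 ^ n * 2 ^ n)))
        ≤ π ^ n * ((Nat.factorial n : ℝ) * (4 * (2 ^ n * 2 ^ n))) := by gcongr
      _ ≤ π ^ n * ((Nat.factorial n : ℝ) * (4 * (2 ^ n * (4 * (s - 1/2) ^ 2)))) := by gcongr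
      _ < (s - 1/2) ^ 2 * (π ^ n * π ^ 2) * (2 ^ n * (((n : ℝ) + 1) * (Nat.factorial n : ℝ))) := by
          nlinarith [mul_pos (mul_pos (mul_pos hXpos hπnp) h2np) hfpos, h18]
  -- convert to a bound on P
  set T : ℝ := (s - 1/2) * (w / Γ) / (2 * π) ^ n * π ^ (n + 1) / 2 with hT
  have hTpos : 0 < T := by
    rw [hT]
    have : 0 < (s - 1/2) * (w / Γ) / (2 * π) ^ n :=
      div_pos (mul_pos hsg (div_pos hwpos hΓpos)) (by positivity)
    positivity
  have hc2 : T ^ 2 = (s - 1/2) ^ 2 * π ^ (n + 2) / (Γ ^ 2 * 4 ^ (n + 1)) := by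
    have h1 : T ^ 2 = (s - 1/2) ^ 2 * w ^ 2 * (π ^ (n + 1)) ^ 2
        / (Γ ^ 2 * ((2 * π) ^ n) ^ 2 * 4) := by
      rw [hT]; ring
    rw [h1, hwsq, mul_pow 2 π n]
    rw [div_eq_div_iff (by positivity) (by positivity)]
    rw [show (4:ℝ) ^ (n + 1) = (2 ^ n * 2 ^ n) * 4 by
      rw [show (4:ℝ) = 2 * 2 by norm_num, mul_pow]; ring]
    ring
  have hPT : P < T := by
    refine lt_of_pow_lt_pow_left₀ 2 hTpos.le ?_
    calc P ^ 2 ≤ π ^ n / (2 ^ n * (Nat.factorial (n + 1) : ℝ)) := hPsq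
      _ < (s - 1/2) ^ 2 * π ^ (n + 2) / (Γ ^ 2 * 4 ^ (n + 1)) := hmain
      _ = T ^ 2 := hc2.symm
  have hGT : G < T := lt_of_le_of_lt hGP hPT
  -- conclude
  have hR : 2 * G / π ^ (n + 1) < (s - 1/2) * (w / Γ) / (2 * π) ^ n := by
    rw [div_lt_iff₀ (by positivity : (0:ℝ) < π ^ (n + 1))]
    have h2 : (s - 1/2) * (w / Γ) / (2 * π) ^ n * π ^ (n + 1) = 2 * T := by
      rw [hT]; ring
    rw [h2]
    linarith
  have hsplit : s * (w / Γ) / (2 * π) ^ n - (w / Γ) / (2 * (2 * π) ^ n)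
      = (s - 1/2) * (w / Γ) / (2 * π) ^ n := by
    have hD : ((2 * π) ^ n : ℝ) ≠ 0 := by positivity
    field_simp
  linarith [hsplit, hR]
end

section
/- Fix σ₁ > 0 and L > 0. The function g(α) = L − (1/α)·arccot(σ₁/α) is strictly increasing on [σ₁, ∞). In particular, its derivative g'(α) = arccot(σ₁/α)/α² − σ₁/(α³(1 + σ₁²/α²)) is positive for α ≥ σ₁. -/
open Real

lemma key16 (σ₁ : ℝ) (hσ₁ : 0 < σ₁) : ∀ α, σ₁ ≤ α →
    0 < arccot (σ₁ / α) / α ^ 2 - σ₁ / (α ^ 3 * (1 + σ₁ ^ 2 / α ^ 2)) := by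
  intro α hα
  have hα0 : 0 < α := lt_of_lt_of_le hσ₁ hα
  have h1 : σ₁ / α ≤ 1 := (div_le_one hα0).2 hα
  have harctan : Real.arctan (σ₁ / α) ≤ π / 4 := by
    have := Real.arctan_strictMono.monotone h1
    simpa [Real.arctan_one] using this
  have hacc : π / 4 ≤ arccot (σ₁ / α) := by
    unfold arccot; linarith
  have hpi : 3 < π := by linarith [Real.pi_gt_three]
  have hdenom : α ^ 3 * (1 + σ₁ ^ 2 / α ^ 2) = α * (α ^ 2 + σ₁ ^ 2) := by
    field_simp
  rw [hdenom, sub_pos, div_lt_div_iff₀ (by positivity) (by positivity)]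
  have h6 : π / 4 * (α * (α ^ 2 + σ₁ ^ 2)) ≤ arccot (σ₁ / α) * (α * (α ^ 2 + σ₁ ^ 2)) :=
    mul_le_mul_of_nonneg_right hacc (by positivity)
  nlinarith [mul_nonneg hα0.le (sq_nonneg (α - σ₁)), mul_pos hσ₁ (mul_pos hα0 hα0)]

theorem stmt16 (σ₁ L : ℝ) (hσ₁ : 0 < σ₁) (hL : 0 < L) :
    StrictMonoOn (fun α => L - (1 / α) * arccot (σ₁ / α)) (Set.Ici σ₁) ∧
    ∀ α, σ₁ ≤ α →
      0 < arccot (σ₁ / α) / α ^ 2 - σ₁ / (α ^ 3 * (1 + σ₁ ^ 2 / α ^ 2)) := by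
  have key := key16 σ₁ hσ₁
  refine ⟨?_, key⟩
  have hderiv : ∀ x : ℝ, 0 < x → HasDerivAt (fun α => L - (1 / α) * arccot (σ₁ / α))
      (arccot (σ₁ / x) / x ^ 2 - σ₁ / (x ^ 3 * (1 + σ₁ ^ 2 / x ^ 2))) x := by
    intro x hx
    have h1 : HasDerivAt (fun a : ℝ => σ₁ / a) (-σ₁ / x ^ 2) x := by
      simpa [Pi.div_def] using (hasDerivAt_const x σ₁).div (hasDerivAt_id x) hx.ne'
    have h2 : HasDerivAt (fun a : ℝ => Real.arctan (σ₁ / a))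
        (1 / (1 + (σ₁ / x) ^ 2) * (-σ₁ / x ^ 2)) x :=
      (Real.hasDerivAt_arctan (σ₁ / x)).comp x h1
    have h3 : HasDerivAt (fun a : ℝ => arccot (σ₁ / a))
        (-(1 / (1 + (σ₁ / x) ^ 2) * (-σ₁ / x ^ 2))) x := by
      unfold arccot
      simpa [Pi.sub_def] using (hasDerivAt_const x (π / 2)).sub h2
    have h4 : HasDerivAt (fun a : ℝ => (1 : ℝ) / a) (-1 / x ^ 2) x := by
      simpa [Pi.div_def] using (hasDerivAt_const x (1:ℝ)).div (hasDerivAt_id x) hx.ne'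
    have h5 : HasDerivAt (fun α => L - (1 / α) * arccot (σ₁ / α)) _ x := ((h4.mul h3).const_sub L)
    convert h5 using 1
    have hx2 : (0:ℝ) < 1 + (σ₁ / x) ^ 2 := by positivity
    field_simp
    ring
  apply strictMonoOn_of_deriv_pos (convex_Ici σ₁)
  · exact fun x hx => ((hderiv x (lt_of_lt_of_le hσ₁ hx)).continuousAt).continuousWithinAt
  · intro x hx
    rw [interior_Ici] at hx
    rw [(hderiv x (hσ₁.trans hx)).deriv]
    exact key x hx.le
end

section
/- Let f_p(x) = arccot(c·(1 + Σ_{j≠p} (x_j/x_p)²)^{1/2}) for x in the open positive orthant of ℝ^p and c > 0, and let ψ: ℝ^p → ℝ^p be a bounded function. Then |f_p(x + ψ(x)) − f_p(x)| = O(|x|^{-1}) as |x| → ∞ (for x with x + ψ(x) remaining in the positive orthant). -/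
open Real Finset

lemma arctan_lipschitz : LipschitzWith 1 Real.arctan := by
  apply lipschitzWith_of_nnnorm_deriv_le Real.differentiable_arctan
  intro x
  have h : ‖deriv Real.arctan x‖ ≤ (1 : ℝ) := by
    rw [Real.deriv_arctan, Real.norm_eq_abs, abs_div, abs_one]
    rw [div_le_one (by positivity)]
    have : (0:ℝ) ≤ x ^ 2 := sq_nonneg x
    rw [abs_of_pos (by positivity)]
    linarith
  exact_mod_cast h

lemma abs_arctan_sub_le (a b : ℝ) : |Real.arctan a - Real.arctan b| ≤ |a - b| := by
  have := arctan_lipschitz.dist_le_mul a b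
  simpa [Real.dist_eq] using this

lemma norm_sq_eq (p : ℕ) (x : EuclideanSpace ℝ (Fin p)) :
    ‖x‖ ^ 2 = ∑ j, (x j) ^ 2 := by
  rw [EuclideanSpace.norm_eq, Real.sq_sqrt (by positivity)]
  simp [sq_abs]

lemma coord_le_norm (p : ℕ) (x : EuclideanSpace ℝ (Fin p)) (j : Fin p) :
    |x j| ≤ ‖x‖ := by
  have h : (x j) ^ 2 ≤ ‖x‖ ^ 2 := by
    rw [norm_sq_eq]
    exact Finset.single_le_sum (f := fun k => (x k) ^ 2)
      (fun k _ => sq_nonneg _) (Finset.mem_univ j)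
  nlinarith [abs_nonneg (x j), sq_abs (x j), norm_nonneg x]

lemma feval (p : ℕ) (i : Fin p) (c : ℝ) (hc : 0 < c)
    (x : EuclideanSpace ℝ (Fin p)) (hx : 0 < x i) :
    arccot (c * Real.sqrt (1 + ∑ j ∈ Finset.univ.erase i, (x j / x i) ^ 2))
      = Real.arctan (x i / (c * ‖x‖)) := by
  have hxne : x ≠ 0 := by
    intro h; rw [h] at hx; simp at hx
  have hnorm : 0 < ‖x‖ := norm_pos_iff.mpr hxne
  have hsum : 1 + ∑ j ∈ Finset.univ.erase i, (x j / x i) ^ 2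
      = (‖x‖ / x i) ^ 2 := by
    have h1 : ‖x‖ ^ 2 = ∑ j, (x j) ^ 2 := norm_sq_eq p x
    have h2 : (x i) ^ 2 + ∑ j ∈ Finset.univ.erase i, (x j) ^ 2 = ∑ j, (x j) ^ 2 := by
      simpa using Finset.add_sum_erase Finset.univ (fun j : Fin p => (x j : ℝ) ^ 2) (Finset.mem_univ i)
    have h3 : ∑ j ∈ Finset.univ.erase i, (x j / x i) ^ 2
        = (∑ j ∈ Finset.univ.erase i, (x j) ^ 2) / (x i) ^ 2 := by
      rw [Finset.sum_div]
      exact Finset.sum_congr rfl (fun j _ => by rw [div_pow])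
    rw [h3, div_pow, h1, ← h2]
    field_simp
  rw [hsum, Real.sqrt_sq (by positivity)]
  have harg : 0 < c * (‖x‖ / x i) := by positivity
  have := Real.arctan_inv_of_pos harg
  unfold arccot
  rw [← this]
  congr 1
  field_simp

theorem stmt19 (p : ℕ) (hp : 0 < p) (i : Fin p) (c : ℝ) (hc : 0 < c)
    (f : EuclideanSpace ℝ (Fin p) → ℝ)
    (hf : f = fun x => arccot (c * Real.sqrt
      (1 + ∑ j ∈ Finset.univ.erase i, (x j / x i) ^ 2)))
    (ψ : EuclideanSpace ℝ (Fin p) → EuclideanSpace ℝ (Fin p))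
    (hψ : ∃ M : ℝ, ∀ x, ‖ψ x‖ ≤ M) :
    ∃ C R : ℝ, 0 < C ∧ ∀ x : EuclideanSpace ℝ (Fin p),
      (∀ j, 0 < x j) → (∀ j, 0 < (x + ψ x) j) → R ≤ ‖x‖ →
      |f (x + ψ x) - f x| ≤ C / ‖x‖ := by
  obtain ⟨M, hM⟩ := hψ
  set M' : ℝ := max M 1 with hM'def
  have hM'1 : (1:ℝ) ≤ M' := le_max_right _ _
  have hM'0 : (0:ℝ) < M' := lt_of_lt_of_le one_pos hM'1
  have hM' : ∀ x, ‖ψ x‖ ≤ M' := fun x => (hM x).trans (le_max_left _ _)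
  refine ⟨4 * M' / c, 4 * M', by positivity, ?_⟩
  intro x hx hy hR
  set y : EuclideanSpace ℝ (Fin p) := x + ψ x with hydef
  have hxnorm : 0 < ‖x‖ := lt_of_lt_of_le (by positivity) hR
  have hdiff : ‖y - x‖ ≤ M' := by
    have : y - x = ψ x := by rw [hydef]; abel
    rw [this]; exact hM' x
  have hynorm : ‖x‖ / 2 ≤ ‖y‖ := by
    have h1 : ‖x‖ - ‖y‖ ≤ ‖x - y‖ := norm_sub_norm_le x y
    have h2 : ‖x - y‖ = ‖y - x‖ := norm_sub_rev x y
    nlinarith [hM' x]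
  have hynorm0 : 0 < ‖y‖ := lt_of_lt_of_le (by positivity) hynorm
  rw [hf]
  simp only
  rw [feval p i c hc y (hy i), feval p i c hc x (hx i)]
  refine (abs_arctan_sub_le _ _).trans ?_
  have key : y i / (c * ‖y‖) - x i / (c * ‖x‖)
      = ((y i - x i) * ‖x‖ + x i * (‖x‖ - ‖y‖)) / (c * ‖y‖ * ‖x‖) := by
    field_simp
    ring
  rw [key, abs_div]
  have hyi : |y i - x i| ≤ M' := by
    have h1 : y i - x i = (y - x) i := by simp [hydef]
    rw [h1]
    exact (coord_le_norm p (y - x) i).trans hdiff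
  have hxi : |x i| ≤ ‖x‖ := coord_le_norm p x i
  have hnn : |‖x‖ - ‖y‖| ≤ M' := by
    refine (abs_norm_sub_norm_le x y).trans ?_
    rw [norm_sub_rev]; exact hdiff
  have hnum : |(y i - x i) * ‖x‖ + x i * (‖x‖ - ‖y‖)| ≤ 2 * M' * ‖x‖ := by
    refine (abs_add_le _ _).trans ?_
    rw [abs_mul, abs_mul]
    have h1 : |y i - x i| * |‖x‖| ≤ M' * ‖x‖ := by
      rw [abs_of_pos hxnorm]
      exact mul_le_mul_of_nonneg_right hyi hxnorm.le
    have h2 : |x i| * |‖x‖ - ‖y‖| ≤ ‖x‖ * M' :=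
      mul_le_mul hxi hnn (abs_nonneg _) hxnorm.le
    nlinarith
  have hden : |c * ‖y‖ * ‖x‖| = c * ‖y‖ * ‖x‖ := abs_of_pos (by positivity)
  rw [hden]
  rw [div_le_div_iff₀ (by positivity) hxnorm]
  calc |(y i - x i) * ‖x‖ + x i * (‖x‖ - ‖y‖)| * ‖x‖
      ≤ (2 * M' * ‖x‖) * ‖x‖ := by nlinarith [abs_nonneg ((y i - x i) * ‖x‖ + x i * (‖x‖ - ‖y‖))]
    _ ≤ 4 * M' / c * (c * ‖y‖ * ‖x‖) := by
        have : ‖x‖ ≤ 2 * ‖y‖ := by linarith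
        have hc' : c ≠ 0 := ne_of_gt hc
        have h4 : (2 * M' * ‖x‖) * ‖x‖ ≤ (2 * M' * (2 * ‖y‖)) * ‖x‖ :=
          mul_le_mul_of_nonneg_right (mul_le_mul_of_nonneg_left this (by positivity)) hxnorm.le
        calc (2 * M' * ‖x‖) * ‖x‖ ≤ (2 * M' * (2 * ‖y‖)) * ‖x‖ := h4
          _ = 4 * M' / c * (c * ‖y‖ * ‖x‖) := by field_simp; ring
end
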